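/- For every r ≥ 2 and every n ≥ 2r, every maximum induced matching in the Kneser graph KG(n,r) has exactly (1/2)·C(2r,r) edges, and its vertex set is the collection of all r-subsets of some fixed 2r-element set S ⊆ [n]. -/

import Mathlib

open Finset


/-- An induced matching in the Kneser graph `KG(n,r)`: a set of edges, given as
ordered pairs of disjoint `r`-subsets of `[n]`, such that distinct edges share no
endpoint and no edge of the graph joins endpoints of two distinct matching edges
(i.e. all cross pairs of endpoints intersect). -/
def IsInducedMatching (n r : ℕ) (M : Finset (Finset ℕ × Finset ℕ)) : Prop :=
  (∀ e ∈ M, (e.1 ⊆ Finset.range n ∧ e.1.card = r) ∧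
    (e.2 ⊆ Finset.range n ∧ e.2.card = r) ∧ Disjoint e.1 e.2) ∧
  (∀ e ∈ M, ∀ e' ∈ M, e ≠ e' →
    e.1 ≠ e'.1 ∧ e.1 ≠ e'.2 ∧ e.2 ≠ e'.1 ∧ e.2 ≠ e'.2 ∧
    ¬ Disjoint e.1 e'.1 ∧ ¬ Disjoint e.1 e'.2 ∧
    ¬ Disjoint e.2 e'.1 ∧ ¬ Disjoint e.2 e'.2)

set_option linter.unusedSectionVars false

namespace KIM

variable {α : Type*} [Fintype α] [LinearOrder α] [DecidableEq α]

/-- A pair of finsets is separated by `f` if all of the first part is below all of the second. -/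
def Sep {β : Type*} [LinearOrder β] (f : α → β) (p : Finset α × Finset α) : Prop :=
  ∀ a ∈ p.1, ∀ b ∈ p.2, f a < f b

instance {β : Type*} [LinearOrder β] (f : α → β) (p : Finset α × Finset α) :
    Decidable (Sep f p) := by unfold Sep; infer_instance

section Count

variable (C : Finset α) (σ : Equiv.Perm α)

/-- rank of `x` within `C` under the order induced by `σ`. -/
def krank (x : α) : ℕ := (C.filter fun y => σ y < σ x).card

lemma krank_lt {x y : α} (hx : x ∈ C) (h : σ x < σ y) : krank C σ x < krank C σ y := by
  apply Finset.card_lt_card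
  rw [Finset.ssubset_iff_of_subset
    (fun z hz => mem_filter.mpr ⟨(mem_filter.mp hz).1, (mem_filter.mp hz).2.trans h⟩)]
  exact ⟨x, mem_filter.mpr ⟨hx, h⟩, fun hc => absurd (mem_filter.mp hc).2 (lt_irrefl _)⟩

lemma lt_of_krank_lt {x y : α} (hy : y ∈ C) (h : krank C σ x < krank C σ y) : σ x < σ y := by
  rcases lt_trichotomy (σ x) (σ y) with h' | h' | h'
  · exact h'
  · rw [EmbeddingLike.apply_eq_iff_eq] at h'; subst h'; exact absurd h (lt_irrefl _)
  · exact absurd (krank_lt C σ hy h') (by omega)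

lemma krank_injOn : Set.InjOn (krank C σ) C := by
  intro x hx y hy hxy
  by_contra hne
  rcases lt_or_gt_of_ne (fun h : σ x = σ y => hne (σ.injective h)) with h | h
  · exact absurd (krank_lt C σ hx h) (by omega)
  · exact absurd (krank_lt C σ hy h) (by omega)

lemma image_krank : C.image (krank C σ) = Finset.range C.card := by
  apply Finset.eq_of_subset_of_card_le
  · intro j hj
    obtain ⟨x, hx, rfl⟩ := mem_image.mp hj
    have hsub : (C.filter fun y => σ y < σ x) ⊆ C.erase x := by
      intro z hz
      rcases mem_filter.mp hz with ⟨hzC, hzlt⟩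
      exact mem_erase.mpr ⟨fun h => absurd hzlt (by simp [h]), hzC⟩
    have := (Finset.card_le_card hsub).trans_lt (Finset.card_erase_lt_of_mem hx)
    exact mem_range.mpr this
  · rw [Finset.card_range, Finset.card_image_of_injOn (krank_injOn C σ)]

variable (r : ℕ)

/-- the bottom `r` elements of `C` in the order induced by `σ`. -/
def bot : Finset α := C.filter fun x => krank C σ x < r

lemma bot_subset : bot C σ r ⊆ C := filter_subset _ _

lemma card_bot (hC : C.card = 2 * r) : (bot C σ r).card = r := by
  have hinj : Set.InjOn (krank C σ) (bot C σ r) :=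
    (krank_injOn C σ).mono (by exact_mod_cast bot_subset C σ r)
  rw [← Finset.card_image_of_injOn hinj]
  have : (bot C σ r).image (krank C σ) = Finset.range r := by
    apply Finset.Subset.antisymm
    · intro j hj
      obtain ⟨x, hx, rfl⟩ := mem_image.mp hj
      exact mem_range.mpr (mem_filter.mp hx).2
    · intro j hj
      have hj' : j ∈ Finset.range C.card := by
        rw [hC]; exact mem_range.mpr ((mem_range.mp hj).trans_le (by omega))
      rw [← image_krank C σ] at hj'
      obtain ⟨x, hx, rfl⟩ := mem_image.mp hj'
      exact mem_image.mpr ⟨x, mem_filter.mpr ⟨hx, mem_range.mp hj⟩, rfl⟩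
  rw [this, Finset.card_range]

lemma bot_eq_iff (hr : 0 < r) (hC : C.card = 2 * r) {U : Finset α} (hU : U ⊆ C)
    (hUcard : U.card = r) :
    bot C σ r = U ↔ ∀ u ∈ U, ∀ w ∈ C \ U, σ u < σ w := by
  constructor
  · rintro rfl
    intro u hu w hw
    rcases mem_sdiff.mp hw with ⟨hwC, hwU⟩
    have h1 : krank C σ u < r := (mem_filter.mp hu).2
    have h2 : ¬ krank C σ w < r := fun h => hwU (mem_filter.mpr ⟨hwC, h⟩)
    exact lt_of_krank_lt C σ hwC (by omega)
  · intro hsep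
    have hsub : U ⊆ bot C σ r := by
      intro u hu
      have hfil : (C.filter fun y => σ y < σ u) ⊆ U.erase u := by
        intro z hz
        rcases mem_filter.mp hz with ⟨hzC, hzlt⟩
        have hzU : z ∈ U := by
          by_contra hzU
          exact absurd hzlt (asymm (hsep u hu z (mem_sdiff.mpr ⟨hzC, hzU⟩)))
        exact mem_erase.mpr ⟨fun h => absurd hzlt (by simp [h]), hzU⟩
      have : krank C σ u ≤ (U.erase u).card := Finset.card_le_card hfil
      rw [Finset.card_erase_of_mem hu, hUcard] at this
      exact mem_filter.mpr ⟨hU hu, by omega⟩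
    exact (Finset.eq_of_subset_of_card_le hsub
      (by rw [card_bot C σ r hC, hUcard])).symm

end Count


section Count2

variable {α : Type*} [Fintype α] [LinearOrder α] [DecidableEq α]

/-- there is a permutation sending `U` into `V` and `C \ U` into `C \ V`. -/
lemma exists_perm_maps (C : Finset α) {U V : Finset α} (hU : U ⊆ C) (hV : V ⊆ C)
    (hcard : U.card = V.card) :
    ∃ π : Equiv.Perm α, (∀ x ∈ U, π x ∈ V) ∧ (∀ x ∈ C \ U, π x ∈ C \ V) := by
  classical
  have hcard2 : (C \ U).card = (C \ V).card := by
    rw [Finset.card_sdiff_of_subset hU, Finset.card_sdiff_of_subset hV, hcard]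
  let e1 : (U : Finset α) ≃ (V : Finset α) := Finset.equivOfCardEq hcard
  let e2 : ((C \ U : Finset α) : Finset α) ≃ ((C \ V : Finset α) : Finset α) :=
    Finset.equivOfCardEq hcard2
  set g : α → α := fun x =>
    if h : x ∈ U then (e1 ⟨x, h⟩ : α)
    else if h2 : x ∈ C then (e2 ⟨x, mem_sdiff.mpr ⟨h2, h⟩⟩ : α) else x with hg
  have hval1 : ∀ x (h : x ∈ U), g x = (e1 ⟨x, h⟩ : α) := by
    intro x h; simp only [hg, dif_pos h]
  have hval2 : ∀ x (h : x ∉ U) (h2 : x ∈ C), g x = (e2 ⟨x, mem_sdiff.mpr ⟨h2, h⟩⟩ : α) := by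
    intro x h h2; simp only [hg, dif_neg h, dif_pos h2]
  have hval3 : ∀ x, x ∉ C → g x = x := by
    intro x hx; simp only [hg, dif_neg (fun h => hx (hU h)), dif_neg hx]
  have hregV : ∀ x, x ∈ U → g x ∈ V := by
    intro x h; rw [hval1 x h]; exact (e1 ⟨x, h⟩).2
  have hregW : ∀ x, x ∉ U → x ∈ C → g x ∈ C \ V := by
    intro x h h2; rw [hval2 x h h2]; exact (e2 ⟨x, mem_sdiff.mpr ⟨h2, h⟩⟩).2
  have hinj : Function.Injective g := by
    intro x y hxy
    by_cases hxU : x ∈ U <;> by_cases hyU : y ∈ U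
    · have := hxy; rw [hval1 x hxU, hval1 y hyU] at this
      exact Subtype.mk_eq_mk.mp (e1.injective (Subtype.coe_injective this))
    · by_cases hyC : y ∈ C
      · have h1 := hregV x hxU; have h2 := hregW y hyU hyC
        rw [hxy] at h1; exact absurd h1 (mem_sdiff.mp h2).2
      · have h1 := hregV x hxU; rw [hxy, hval3 y hyC] at h1
        exact absurd (hV h1) hyC
    · by_cases hxC : x ∈ C
      · have h1 := hregV y hyU; have h2 := hregW x hxU hxC
        rw [← hxy] at h1; exact absurd h1 (mem_sdiff.mp h2).2
      · have h1 := hregV y hyU; rw [← hxy, hval3 x hxC] at h1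
        exact absurd (hV h1) hxC
    · by_cases hxC : x ∈ C <;> by_cases hyC : y ∈ C
      · have := hxy; rw [hval2 x hxU hxC, hval2 y hyU hyC] at this
        exact Subtype.mk_eq_mk.mp (e2.injective (Subtype.coe_injective this))
      · have h1 := hregW x hxU hxC; rw [hxy, hval3 y hyC] at h1
        exact absurd (mem_sdiff.mp h1).1 hyC
      · have h1 := hregW y hyU hyC; rw [← hxy, hval3 x hxC] at h1
        exact absurd (mem_sdiff.mp h1).1 hxC
      · rw [hval3 x hxC, hval3 y hyC] at hxy; exact hxy
  refine ⟨Equiv.ofBijective g (Finite.injective_iff_bijective.mp hinj), ?_, ?_⟩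
  · intro x hx; exact hregV x hx
  · intro x hx
    rcases mem_sdiff.mp hx with ⟨hxC, hxU⟩
    exact hregW x hxU hxC

lemma perm_inv_maps {π : Equiv.Perm α} {s t : Finset α} (h : ∀ x ∈ s, π x ∈ t)
    (hc : s.card = t.card) : ∀ y ∈ t, π⁻¹ y ∈ s := by
  have himg : s.image π = t := by
    apply Finset.eq_of_subset_of_card_le
    · intro y hy; obtain ⟨x, hx, rfl⟩ := mem_image.mp hy; exact h x hx
    · rw [Finset.card_image_of_injective _ π.injective, hc]
  intro y hy
  rw [← himg] at hy
  obtain ⟨x, hx, rfl⟩ := mem_image.mp hy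
  rwa [Equiv.Perm.inv_def, Equiv.symm_apply_apply]

variable (r : ℕ)

lemma card_fiber_eq (hr : 0 < r) (C : Finset α) (hC : C.card = 2 * r)
    {U V : Finset α} (hU : U ⊆ C) (hV : V ⊆ C) (hUc : U.card = r) (hVc : V.card = r) :
    ((univ : Finset (Equiv.Perm α)).filter fun σ => bot C σ r = U).card
      = ((univ : Finset (Equiv.Perm α)).filter fun σ => bot C σ r = V).card := by
  obtain ⟨π, hπ1, hπ2⟩ := exists_perm_maps C hV hU (hVc.trans hUc.symm)
  have hπ1' := perm_inv_maps hπ1 (hVc.trans hUc.symm)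
  have hπ2' := perm_inv_maps hπ2 (by rw [Finset.card_sdiff_of_subset hV, Finset.card_sdiff_of_subset hU, hUc, hVc])
  apply Finset.card_bij' (fun σ _ => σ * π) (fun τ _ => τ * π⁻¹)
  · intro σ hσ
    rw [mem_filter] at hσ ⊢
    refine ⟨mem_univ _, ?_⟩
    rw [bot_eq_iff _ _ r hr hC hV hVc]
    intro u hu w hw
    have hsep := (bot_eq_iff C σ r hr hC hU hUc).mp hσ.2
    simpa using hsep (π u) (hπ1 u hu) (π w) (hπ2 w hw)
  · intro τ hτ
    rw [mem_filter] at hτ ⊢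
    refine ⟨mem_univ _, ?_⟩
    rw [bot_eq_iff _ _ r hr hC hU hUc]
    intro u hu w hw
    have hsep := (bot_eq_iff C τ r hr hC hV hVc).mp hτ.2
    simpa using hsep (π⁻¹ u) (hπ1' u hu) (π⁻¹ w) (hπ2' w hw)
  · intro σ _; ext x; simp
  · intro τ _; ext x; simp

/-- The key counting lemma. -/
lemma count_sep (hr : 0 < r) (A B : Finset α) (hA : A.card = r) (hB : B.card = r)
    (hd : Disjoint A B) :
    ((univ : Finset (Equiv.Perm α)).filter fun σ => Sep (fun x => σ x) (A, B)).card
      * (2 * r).choose r = Nat.factorial (Fintype.card α) := by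
  set C := A ∪ B with hCdef
  have hC : C.card = 2 * r := by
    rw [hCdef, Finset.card_union_of_disjoint hd, hA, hB]; ring
  have hBA : C \ A = B := by
    ext x
    simp only [hCdef, mem_sdiff, mem_union]
    constructor
    · rintro ⟨hx | hx, hxA⟩
      · exact absurd hx hxA
      · exact hx
    · intro hx
      exact ⟨Or.inr hx, fun hxA => (Finset.disjoint_left.mp hd hxA) hx⟩
  have hAC : A ⊆ C := Finset.subset_union_left
  -- the filter over Sep equals the fiber over A
  have hfilA : ((univ : Finset (Equiv.Perm α)).filter fun σ => Sep (fun x => σ x) (A, B))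
      = (univ : Finset (Equiv.Perm α)).filter fun σ => bot C σ r = A := by
    apply Finset.filter_congr
    intro σ _
    rw [bot_eq_iff C σ r hr hC hAC hA, hBA]
    constructor
    · intro h u hu w hw; exact h u hu w hw
    · intro h u hu w hw; exact h u hu w hw
  have hfib : ∀ σ : Equiv.Perm α, σ ∈ (univ : Finset (Equiv.Perm α)) →
      bot C σ r ∈ C.powersetCard r := fun σ _ =>
    Finset.mem_powersetCard.mpr ⟨bot_subset C σ r, card_bot C σ r hC⟩
  have hsum := Finset.card_eq_sum_card_fiberwise hfib
  rw [Finset.card_univ, Fintype.card_perm] at hsum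
  have hconst : ∀ U ∈ C.powersetCard r,
      ((univ : Finset (Equiv.Perm α)).filter fun σ => bot C σ r = U).card
        = ((univ : Finset (Equiv.Perm α)).filter fun σ => bot C σ r = A).card := by
    intro U hU
    rcases Finset.mem_powersetCard.mp hU with ⟨hU1, hU2⟩
    exact card_fiber_eq r hr C hC hU1 hAC hU2 hA
  rw [Finset.sum_congr rfl hconst, Finset.sum_const, smul_eq_mul,
    Finset.card_powersetCard, hC] at hsum
  rw [hfilA, hsum]; ring

end Count2
section Family

variable {α : Type*} [Fintype α] [LinearOrder α] [DecidableEq α]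
variable {r : ℕ} {P : Finset (Finset α × Finset α)}

/-- cross-intersecting hypothesis on a family of ordered pairs. -/
def CrossInt (P : Finset (Finset α × Finset α)) : Prop :=
  ∀ p ∈ P, ∀ q ∈ P, p ≠ q → ¬ Disjoint p.1 q.2

lemma sep_unique {β : Type*} [LinearOrder β] (h2 : CrossInt P) {p q : Finset α × Finset α}
    (hp : p ∈ P) (hq : q ∈ P) (hne : p ≠ q) {f : α → β} (hfp : Sep f p) : ¬ Sep f q := by
  intro hfq
  obtain ⟨x, hx1, hx2⟩ := Finset.not_disjoint_iff.mp (h2 p hp q hq hne)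
  obtain ⟨y, hy1, hy2⟩ := Finset.not_disjoint_iff.mp (h2 q hq p hp (Ne.symm hne))
  exact absurd (hfp x hx1 y hy2) (asymm (hfq y hy1 x hx2))

lemma family_card_le (hr : 0 < r)
    (h1 : ∀ p ∈ P, p.1.card = r ∧ p.2.card = r ∧ Disjoint p.1 p.2)
    (h2 : CrossInt P) :
    P.card ≤ (2 * r).choose r ∧
      (P.card = (2 * r).choose r → ∀ σ : Equiv.Perm α, ∃ p ∈ P, Sep (fun x => σ x) p) := by
  classical
  set E : Finset α × Finset α → Finset (Equiv.Perm α) :=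
    fun p => (univ : Finset (Equiv.Perm α)).filter fun σ => Sep (fun x => σ x) p with hE
  have hdisj : ∀ p ∈ P, ∀ q ∈ P, p ≠ q → Disjoint (E p) (E q) := by
    intro p hp q hq hne
    rw [Finset.disjoint_left]
    intro σ hσp hσq
    exact sep_unique h2 hp hq hne (mem_filter.mp hσp).2 (mem_filter.mp hσq).2
  have hcount : ∀ p ∈ P, (E p).card * (2 * r).choose r = Nat.factorial (Fintype.card α) := by
    intro p hp
    obtain ⟨hp1, hp2, hp3⟩ := h1 p hp
    exact count_sep r hr p.1 p.2 hp1 hp2 hp3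
  have hble : (P.biUnion E).card = ∑ p ∈ P, (E p).card := Finset.card_biUnion hdisj
  have hle : (P.biUnion E).card ≤ Nat.factorial (Fintype.card α) := by
    exact le_of_le_of_eq (Finset.card_le_univ _) Fintype.card_perm
  have hkey : P.card * Nat.factorial (Fintype.card α)
      = (∑ p ∈ P, (E p).card) * (2 * r).choose r := by
    rw [Finset.sum_mul]
    rw [Finset.sum_congr rfl hcount, Finset.sum_const, smul_eq_mul]
  constructor
  · have h' : P.card * Nat.factorial (Fintype.card α)
        ≤ (2 * r).choose r * Nat.factorial (Fintype.card α) := by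
      rw [hkey, mul_comm ((2 * r).choose r) (Nat.factorial (Fintype.card α))]
      exact Nat.mul_le_mul_right _ (hble ▸ hle)
    exact Nat.le_of_mul_le_mul_right h' (Nat.factorial_pos _)
  · intro hcard σ
    have hsum_eq : ∑ p ∈ P, (E p).card = Nat.factorial (Fintype.card α) := by
      have hpos : 0 < (2 * r).choose r := Nat.choose_pos (by omega)
      have : (∑ p ∈ P, (E p).card) * (2 * r).choose r
          = Nat.factorial (Fintype.card α) * (2 * r).choose r := by
        rw [← hkey, hcard]; ring
      exact Nat.eq_of_mul_eq_mul_right hpos this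
    have huniv : P.biUnion E = (univ : Finset (Equiv.Perm α)) := by
      apply Finset.eq_univ_of_card
      rw [hble, hsum_eq, Fintype.card_perm]
    have : σ ∈ P.biUnion E := huniv ▸ mem_univ σ
    obtain ⟨p, hp, hσ⟩ := Finset.mem_biUnion.mp this
    exact ⟨p, hp, (mem_filter.mp hσ).2⟩

/-- coverage transfers from permutations to arbitrary injections into ℕ. -/
lemma cover_inj (hcov : ∀ σ : Equiv.Perm α, ∃ p ∈ P, Sep (fun x => σ x) p)
    (f : α → ℕ) (hf : Function.Injective f) : ∃ p ∈ P, Sep f p := by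
  classical
  set s : Finset ℕ := univ.image f with hs
  have hscard : s.card = Fintype.card α := by
    rw [hs, Finset.card_image_of_injective _ hf, Finset.card_univ]
  set e : Fin (Fintype.card α) ≃o s := s.orderIsoOfFin hscard with he
  set e2 : Fin (Fintype.card α) ≃o α := Fintype.orderIsoFinOfCardEq α rfl with he2
  set g : α → α := fun x => e2 (e.symm ⟨f x, mem_image.mpr ⟨x, mem_univ x, rfl⟩⟩) with hg
  have hmono : ∀ x y, f x < f y → g x < g y := by
    intro x y hxy
    rw [hg]
    apply e2.strictMono
    apply e.symm.strictMono
    exact Subtype.mk_lt_mk.mpr hxy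
  have hginj : Function.Injective g := by
    intro x y hxy
    rcases lt_trichotomy (f x) (f y) with h | h | h
    · exact absurd hxy (ne_of_lt (hmono x y h))
    · exact hf h
    · exact absurd hxy.symm (ne_of_lt (hmono y x h))
  set σ : Equiv.Perm α := Equiv.ofBijective g (Finite.injective_iff_bijective.mp hginj)
    with hσ
  obtain ⟨p, hp, hsep⟩ := hcov σ
  refine ⟨p, hp, fun a ha b hb => ?_⟩
  have hgab : g a < g b := hsep a ha b hb
  rcases lt_trichotomy (f a) (f b) with h | h | h
  · exact h
  · exact absurd hgab (by rw [hf h]; exact lt_irrefl _)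
  · exact absurd hgab (asymm (hmono b a h))

end Family
section Exchange

variable {α : Type*} [Fintype α] [LinearOrder α] [DecidableEq α]

/-- an injective enumeration of `α` bounded by the cardinality. -/
def idx (x : α) : ℕ := ((Fintype.orderIsoFinOfCardEq α rfl).symm x : ℕ)

lemma idx_lt (x : α) : idx x < Fintype.card α := ((Fintype.orderIsoFinOfCardEq α rfl).symm x).isLt

lemma idx_inj : Function.Injective (idx : α → ℕ) := fun x y h =>
  (Fintype.orderIsoFinOfCardEq α rfl).symm.injective (Fin.val_injective h)

/-- an injective function realizing a given tier ordering. -/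
def tf (t : α → ℕ) (x : α) : ℕ := Fintype.card α * t x + idx x

lemma tf_lt {t : α → ℕ} {x y : α} (h : t x < t y) : tf t x < tf t y := by
  have h1 := idx_lt x
  have h2 := idx_lt y
  unfold tf
  have : Fintype.card α * t x + Fintype.card α ≤ Fintype.card α * t y := by
    rw [← Nat.mul_succ]; exact Nat.mul_le_mul_left _ h
  omega

lemma tf_le_t {t : α → ℕ} {x y : α} (h : tf t x ≤ tf t y) : t x ≤ t y := by
  by_contra hc
  push_neg at hc
  exact absurd h (not_le.mpr (tf_lt hc))

lemma tf_inj (t : α → ℕ) : Function.Injective (tf t) := by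
  intro x y h
  have h1 : t x = t y := le_antisymm (tf_le_t h.le) (tf_le_t h.ge)
  have h2 : idx x = idx y := by unfold tf at h; rw [h1] at h; omega
  exact idx_inj h2

variable {r : ℕ} {P : Finset (Finset α × Finset α)}

lemma exchange (hr : 0 < r)
    (h1 : ∀ p ∈ P, p.1.card = r ∧ p.2.card = r ∧ Disjoint p.1 p.2)
    (h2 : CrossInt P)
    (hcov : ∀ f : α → ℕ, Function.Injective f → ∃ p ∈ P, Sep f p)
    {A B : Finset α} (hAB : (A, B) ∈ P) {a b : α} (ha : a ∈ A) (hb : b ∈ B) :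
    ∃ H, (insert b (A.erase a), H) ∈ P := by
  classical
  have hd : Disjoint A B := (h1 _ hAB).2.2
  have hbA : b ∉ A := fun h => (Finset.disjoint_left.mp hd h) hb
  have hab : a ≠ b := fun h => hbA (h ▸ ha)
  set t0 : α → ℕ := fun x =>
    if x ∈ A.erase a then 0 else if x = a then 1 else if x = b then 2 else 3 with ht0
  set t1 : α → ℕ := fun x =>
    if x ∈ A.erase a then 0 else if x = b then 1 else if x = a then 2 else 3 with ht1
  have ht0a : t0 a = 1 := by simp [ht0]
  have ht0b : t0 b = 2 := by
    simp only [ht0]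
    rw [if_neg (fun h => hbA (Finset.erase_subset _ _ h)), if_neg (Ne.symm hab)]
    simp
  have ht1a : t1 a = 2 := by
    simp only [ht1]
    rw [if_neg (Finset.notMem_erase a A), if_neg hab]
    simp
  have ht1b : t1 b = 1 := by
    simp only [ht1]
    rw [if_neg (fun h => hbA (Finset.erase_subset _ _ h))]
    simp
  have htx : ∀ x, x ≠ a → x ≠ b → t0 x = t1 x ∧ (t0 x = 0 ∨ t0 x = 3) := by
    intro x hxa hxb
    simp only [ht0, ht1]
    by_cases hx : x ∈ A.erase a
    · rw [if_pos hx, if_pos hx]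
      exact ⟨rfl, Or.inl rfl⟩
    · rw [if_neg hx, if_neg hx, if_neg hxa, if_neg hxb, if_neg hxb, if_neg hxa]
      exact ⟨rfl, Or.inr rfl⟩
  have ht0A : ∀ x ∈ A, t0 x ≤ 1 := by
    intro x hx
    by_cases hxe : x ∈ A.erase a
    · simp only [ht0]
      rw [if_pos hxe]
      omega
    · have hxa : x = a := by
        by_contra hxa
        exact hxe (Finset.mem_erase.mpr ⟨hxa, hx⟩)
      rw [hxa, ht0a]
  have ht0B : ∀ y ∈ B, 2 ≤ t0 y := by
    intro y hy
    have hyA : y ∉ A := fun h => (Finset.disjoint_left.mp hd h) hy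
    have hye : y ∉ A.erase a := fun h => hyA (Finset.erase_subset _ _ h)
    have hya : y ≠ a := fun h => hyA (h ▸ ha)
    simp only [ht0]
    rw [if_neg hye, if_neg hya]
    by_cases hyb : y = b
    · rw [if_pos hyb]
    · rw [if_neg hyb]
      omega
  have hsep0 : Sep (tf t0) (A, B) := by
    intro x hx y hy
    exact tf_lt (lt_of_le_of_lt (ht0A x hx) (lt_of_lt_of_le (by norm_num) (ht0B y hy)))
  obtain ⟨⟨G, H⟩, hq, hsepq⟩ := hcov (tf t1) (tf_inj t1)
  have hqne : ((G, H) : Finset α × Finset α) ≠ (A, B) := by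
    intro h
    rw [Prod.mk.injEq] at h
    obtain ⟨rfl, rfl⟩ := h
    exact absurd (hsepq a ha b hb) (asymm (tf_lt (by rw [ht1a, ht1b]; omega)))
  have hnsep0 : ¬ Sep (tf t0) (G, H) := sep_unique h2 hAB hq (Ne.symm hqne) hsep0
  unfold Sep at hnsep0
  push_neg at hnsep0
  obtain ⟨g, hg, h', hh', hle0⟩ := hnsep0
  have hlt1 : tf t1 g < tf t1 h' := hsepq g hg h' hh'
  have ht1le : t1 g ≤ t1 h' := tf_le_t hlt1.le
  have ht0le : t0 h' ≤ t0 g := tf_le_t hle0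
  have hgb : g = b ∧ h' = a := by
    by_cases hga : g = a
    · by_cases hha : h' = a
      · rw [hga, hha] at hlt1; exact absurd hlt1 (lt_irrefl _)
      by_cases hhb : h' = b
      · rw [hga, ht1a, hhb, ht1b] at ht1le; omega
      · obtain ⟨he, hv⟩ := htx h' hha hhb
        rw [hga, ht1a, ← he] at ht1le
        rw [hga, ht0a] at ht0le
        omega
    by_cases hgb : g = b
    · by_cases hha : h' = a
      · exact ⟨hgb, hha⟩
      by_cases hhb : h' = b
      · rw [hgb, hhb] at hlt1; exact absurd hlt1 (lt_irrefl _)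
      · obtain ⟨he, hv⟩ := htx h' hha hhb
        rw [hgb, ht1b, ← he] at ht1le
        rw [hgb, ht0b] at ht0le
        omega
    · obtain ⟨heg, hvg⟩ := htx g hga hgb
      by_cases hha : h' = a
      · rw [hha, ht1a] at ht1le
        rw [hha, ht0a] at ht0le
        omega
      by_cases hhb : h' = b
      · rw [hhb, ht1b] at ht1le
        rw [hhb, ht0b] at ht0le
        omega
      · obtain ⟨heh, hvh⟩ := htx h' hha hhb
        have e1 : tf t0 g = tf t1 g := by unfold tf; rw [heg]
        have e2 : tf t0 h' = tf t1 h' := by unfold tf; rw [heh]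
        omega
  rw [hgb.1] at hg
  rw [hgb.2] at hh'
  have hWcard : (insert b (A.erase a)).card = r := by
    rw [Finset.card_insert_of_notMem (fun h => hbA (Finset.erase_subset _ _ h)),
      Finset.card_erase_of_mem ha, (h1 _ hAB).1]
    omega
  have hGsub : G ⊆ insert b (A.erase a) := by
    intro x hx
    have hlt : tf t1 x < tf t1 a := hsepq x hx a hh'
    have hxa : x ≠ a := by rintro rfl; exact absurd hlt (lt_irrefl _)
    have hxle : t1 x ≤ t1 a := tf_le_t hlt.le
    by_cases hxe : x ∈ A.erase a
    · exact Finset.mem_insert.mpr (Or.inr hxe)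
    by_cases hxb : x = b
    · exact Finset.mem_insert.mpr (Or.inl hxb)
    · obtain ⟨he, hv⟩ := htx x hxa hxb
      rw [ht1a, ← he] at hxle
      have : t0 x = 0 := by omega
      simp only [ht0] at this
      rw [if_neg hxe, if_neg hxa, if_neg hxb] at this
      omega
  have hGW : G = insert b (A.erase a) := by
    apply Finset.eq_of_subset_of_card_le hGsub
    rw [hWcard, (h1 _ hq).1]
  exact ⟨H, hGW ▸ hq⟩

end Exchange
section Structure

variable {α : Type*} [Fintype α] [LinearOrder α] [DecidableEq α]
variable {r : ℕ} {P : Finset (Finset α × Finset α)}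

lemma union_sdiff_left' {A B : Finset α} (hd : Disjoint A B) : (A ∪ B) \ A = B := by
  ext x
  simp only [mem_sdiff, mem_union]
  constructor
  · rintro ⟨hx | hx, hxA⟩
    · exact absurd hx hxA
    · exact hx
  · intro hx
    exact ⟨Or.inr hx, fun hxA => (Finset.disjoint_left.mp hd hxA) hx⟩

lemma all_pairs (hr : 0 < r)
    (h1 : ∀ p ∈ P, p.1.card = r ∧ p.2.card = r ∧ Disjoint p.1 p.2)
    (h2 : CrossInt P)
    (hsym : ∀ p ∈ P, p.swap ∈ P)
    (hcov : ∀ f : α → ℕ, Function.Injective f → ∃ p ∈ P, Sep f p)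
    {A B : Finset α} (hAB : (A, B) ∈ P) :
    ∀ T ⊆ A ∪ B, T.card = r → (T, (A ∪ B) \ T) ∈ P := by
  have hA : A.card = r := (h1 _ hAB).1
  have hd : Disjoint A B := (h1 _ hAB).2.2
  suffices H : ∀ k, ∀ T ⊆ A ∪ B, T.card = r → (A \ T).card = k → (T, (A ∪ B) \ T) ∈ P by
    intro T hT hTc
    exact H _ T hT hTc rfl
  intro k
  induction k with
  | zero =>
    intro T hT hTc hk
    have hAsub : A ⊆ T := by
      rw [← Finset.sdiff_eq_empty_iff_subset]
      exact Finset.card_eq_zero.mp hk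
    have hAT : A = T := Finset.eq_of_subset_of_card_le hAsub (by rw [hTc, hA])
    rw [← hAT, union_sdiff_left' hd]
    exact hAB
  | succ k ih =>
    intro T hT hTc hk
    obtain ⟨a, haAT⟩ := Finset.card_pos.mp (show 0 < (A \ T).card by omega)
    rcases Finset.mem_sdiff.mp haAT with ⟨haA, haT⟩
    have hTAc : (T \ A).card = k + 1 := by
      rw [Finset.card_sdiff_comm (by rw [hTc, hA])]
      exact hk
    obtain ⟨b, hbTA⟩ := Finset.card_pos.mp (show 0 < (T \ A).card by omega)
    rcases Finset.mem_sdiff.mp hbTA with ⟨hbT, hbA⟩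
    have hbB : b ∈ B := (Finset.mem_union.mp (hT hbT)).resolve_left hbA
    have hba : b ≠ a := fun h => hbA (h ▸ haA)
    have hanT' : a ∉ T.erase b := fun h => haT (Finset.erase_subset _ _ h)
    set T' := insert a (T.erase b) with hT'def
    have hT'sub : T' ⊆ A ∪ B :=
      Finset.insert_subset (Finset.mem_union_left _ haA)
        ((Finset.erase_subset _ _).trans hT)
    have hT'c : T'.card = r := by
      rw [hT'def, Finset.card_insert_of_notMem hanT', Finset.card_erase_of_mem hbT, hTc]
      omega
    have hAT' : (A \ T').card = k := by
      have heq : A \ T' = (A \ T).erase a := by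
        ext x
        simp only [hT'def, mem_sdiff, mem_insert, mem_erase, not_or]
        constructor
        · rintro ⟨hxA, hxa, hxe⟩
          exact ⟨hxa, hxA, fun hxT => hxe ⟨fun hxb => hbA (hxb ▸ hxA), hxT⟩⟩
        · rintro ⟨hxa, hxA, hxT⟩
          exact ⟨hxA, hxa, fun h => hxT h.2⟩
      rw [heq, Finset.card_erase_of_mem haAT, hk]
      omega
    have hprev := ih T' hT'sub hT'c hAT'
    have hbST' : b ∈ (A ∪ B) \ T' := by
      refine Finset.mem_sdiff.mpr ⟨hT hbT, ?_⟩
      rw [hT'def, Finset.mem_insert]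
      rintro (h | h)
      · exact hba h
      · exact absurd (Finset.mem_erase.mp h).1 (by simp)
    obtain ⟨H1, hH1⟩ := exchange hr h1 h2 hcov hprev (Finset.mem_insert_self a _) hbST'
    have hTrec : insert b (T'.erase a) = T := by
      rw [hT'def, Finset.erase_insert hanT']
      exact Finset.insert_erase hbT
    rw [hTrec] at hH1
    have hswap : ((A ∪ B) \ T', T') ∈ P := by
      have := hsym _ hprev
      simpa using this
    obtain ⟨H2, hH2⟩ := exchange hr h1 h2 hcov hswap hbST' (Finset.mem_insert_self a _)
    have hSrec : insert a (((A ∪ B) \ T').erase b) = (A ∪ B) \ T := by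
      ext x
      simp only [hT'def, Finset.mem_insert, Finset.mem_erase, Finset.mem_sdiff, not_or]
      constructor
      · rintro (rfl | ⟨hxb, hxS, hxa, hxe⟩)
        · exact ⟨Finset.mem_union_left _ haA, haT⟩
        · exact ⟨hxS, fun hxT => hxe ⟨hxb, hxT⟩⟩
      · rintro ⟨hxS, hxT⟩
        by_cases hxa : x = a
        · exact Or.inl hxa
        · exact Or.inr ⟨fun h => hxT (h ▸ hbT), hxS, hxa,
            fun h => hxT h.2⟩
    rw [hSrec] at hH2
    have hH2' : ((H2, (A ∪ B) \ T) : Finset α × Finset α) ∈ P := by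
      have := hsym _ hH2
      simpa using this
    by_cases hPeq : ((T, H1) : Finset α × Finset α) = (H2, (A ∪ B) \ T)
    · have h2' : H1 = (A ∪ B) \ T := congrArg Prod.snd hPeq
      rw [h2'] at hH1
      exact hH1
    · exact absurd Finset.sdiff_disjoint.symm (h2 _ hH1 _ hH2' hPeq)

lemma family_structure (hr : 0 < r)
    (h1 : ∀ p ∈ P, p.1.card = r ∧ p.2.card = r ∧ Disjoint p.1 p.2)
    (h2 : CrossInt P)
    (hsym : ∀ p ∈ P, p.swap ∈ P)
    (hcard : P.card = (2 * r).choose r) :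
    ∃ S : Finset α, S.card = 2 * r ∧
      P = (S.powersetCard r).image (fun T => (T, S \ T)) := by
  have hcov' := (family_card_le hr h1 h2).2 hcard
  have hcov : ∀ f : α → ℕ, Function.Injective f → ∃ p ∈ P, Sep f p :=
    fun f hf => cover_inj hcov' f hf
  have hPne : P.Nonempty := Finset.card_pos.mp (by
    rw [hcard]; exact Nat.choose_pos (by omega))
  obtain ⟨⟨A, B⟩, hAB⟩ := hPne
  have hd : Disjoint A B := (h1 _ hAB).2.2
  have hScard : (A ∪ B).card = 2 * r := by
    rw [Finset.card_union_of_disjoint hd, (h1 _ hAB).1, (h1 _ hAB).2.1]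
    ring
  have hsub : ((A ∪ B).powersetCard r).image (fun T => (T, (A ∪ B) \ T)) ⊆ P := by
    intro p hp
    obtain ⟨T, hTmem, rfl⟩ := Finset.mem_image.mp hp
    rcases Finset.mem_powersetCard.mp hTmem with ⟨hT1, hT2⟩
    exact all_pairs hr h1 h2 hsym hcov hAB T hT1 hT2
  have hcardim : (((A ∪ B).powersetCard r).image (fun T => (T, (A ∪ B) \ T))).card
      = (2 * r).choose r := by
    rw [Finset.card_image_of_injOn (fun T _ T' _ h => congrArg Prod.fst h),
      Finset.card_powersetCard, hScard]
  exact ⟨A ∪ B, hScard,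
    (Finset.eq_of_subset_of_card_le hsub (by rw [hcardim, hcard])).symm⟩

end Structure
section Convert

variable {n : ℕ}

/-- convert a finset of naturals into a finset of `Fin n`. -/
def toFin (n : ℕ) (s : Finset ℕ) : Finset (Fin n) :=
  (s.filter (· < n)).attachFin (fun m hm => (Finset.mem_filter.mp hm).2)

lemma mem_toFin {s : Finset ℕ} {i : Fin n} : i ∈ toFin n s ↔ (i : ℕ) ∈ s := by
  simp [toFin, Finset.mem_attachFin, i.isLt]

lemma image_toFin {s : Finset ℕ} (hs : s ⊆ Finset.range n) :
    (toFin n s).image (Fin.val) = s := by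
  ext x
  simp only [Finset.mem_image]
  constructor
  · rintro ⟨i, hi, rfl⟩
    exact mem_toFin.mp hi
  · intro hx
    exact ⟨⟨x, Finset.mem_range.mp (hs hx)⟩, mem_toFin.mpr hx, rfl⟩

lemma card_toFin {s : Finset ℕ} (hs : s ⊆ Finset.range n) : (toFin n s).card = s.card := by
  have h := Finset.card_image_of_injective (toFin n s) (Fin.val_injective)
  rw [image_toFin hs] at h
  exact h.symm

lemma toFin_inj {s t : Finset ℕ} (hs : s ⊆ Finset.range n) (ht : t ⊆ Finset.range n)
    (h : toFin n s = toFin n t) : s = t := by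
  rw [← image_toFin hs, ← image_toFin ht, h]

lemma disjoint_toFin_of {s t : Finset ℕ} (h : Disjoint s t) :
    Disjoint (toFin n s) (toFin n t) := by
  rw [Finset.disjoint_left] at h ⊢
  intro i hi hit
  exact h (mem_toFin.mp hi) (mem_toFin.mp hit)

lemma not_disjoint_toFin {s t : Finset ℕ} (hs : s ⊆ Finset.range n)
    (h : ¬ Disjoint s t) : ¬ Disjoint (toFin n s) (toFin n t) := by
  obtain ⟨x, hx1, hx2⟩ := Finset.not_disjoint_iff.mp h
  exact Finset.not_disjoint_iff.mpr
    ⟨⟨x, Finset.mem_range.mp (hs hx1)⟩, mem_toFin.mpr hx1, mem_toFin.mpr hx2⟩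

end Convert

lemma choose_double (m : ℕ) : (2 * m + 2).choose (m + 1) = 2 * ((2 * m + 1).choose m) := by
  have h : (2 * m + 1 + 1).choose (m + 1)
      = (2 * m + 1).choose m + (2 * m + 1).choose (m + 1) :=
    Nat.choose_succ_succ (2 * m + 1) m
  have h2 : (2 * m + 1).choose (m + 1) = (2 * m + 1).choose m := by
    have h5 := Nat.choose_symm (n := 2 * m + 1) (k := m + 1) (by omega)
    have h3 : 2 * m + 1 - (m + 1) = m := by omega
    rw [h3] at h5
    exact h5.symm
  have h4 : (2 : ℕ) * m + 2 = 2 * m + 1 + 1 := by ring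
  rw [h4, h, h2]
  ring

/-- the standard construction: all pairs `(T, [2r] \ T)` with `0 ∈ T`. -/
lemma construction_exists (n r : ℕ) (hr : 1 ≤ r) (hn : 2 * r ≤ n) :
    ∃ M0 : Finset (Finset ℕ × Finset ℕ), IsInducedMatching n r M0 ∧
      M0.card = (2 * r - 1).choose (r - 1) := by
  classical
  set R : Finset ℕ := Finset.range (2 * r) with hR
  set Fam : Finset (Finset ℕ) := (R.powersetCard r).filter (fun T => 0 ∈ T) with hFam
  set M0 : Finset (Finset ℕ × Finset ℕ) := Fam.image (fun T => (T, R \ T)) with hM0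
  have hRn : R ⊆ Finset.range n := by
    rw [hR]
    exact Finset.range_subset_range.mpr hn
  have hmem : ∀ T ∈ Fam, T ⊆ R ∧ T.card = r ∧ 0 ∈ T := by
    intro T hT
    rcases Finset.mem_filter.mp hT with ⟨hT1, hT2⟩
    rcases Finset.mem_powersetCard.mp hT1 with ⟨h1, h2⟩
    exact ⟨h1, h2, hT2⟩
  have hcsd : ∀ T ∈ Fam, (R \ T).card = r := by
    intro T hT
    obtain ⟨h1, h2, _⟩ := hmem T hT
    rw [Finset.card_sdiff_of_subset h1, hR, Finset.card_range, h2]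
    omega
  refine ⟨M0, ⟨?_, ?_⟩, ?_⟩
  · intro e he
    obtain ⟨T, hT, rfl⟩ := Finset.mem_image.mp he
    obtain ⟨h1, h2, h0⟩ := hmem T hT
    exact ⟨⟨h1.trans hRn, h2⟩, ⟨Finset.sdiff_subset.trans hRn, hcsd T hT⟩,
      Finset.sdiff_disjoint.symm⟩
  · intro e he e' he' hne
    obtain ⟨T, hT, rfl⟩ := Finset.mem_image.mp he
    obtain ⟨T', hT', rfl⟩ := Finset.mem_image.mp he'
    obtain ⟨h1, h2, h0⟩ := hmem T hT
    obtain ⟨h1', h2', h0'⟩ := hmem T' hT'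
    have hTT' : T ≠ T' := fun h => hne (by rw [h])
    have hsub_eq : ∀ {U U' : Finset ℕ}, U ⊆ R → U.card = r → U'.card = r → U ⊆ U' → U = U' :=
      fun hU hUc hU'c hsub => Finset.eq_of_subset_of_card_le hsub (by omega)
    refine ⟨hTT', ?_, ?_, ?_, ?_, ?_, ?_, ?_⟩
    · intro h
      have h' : T = R \ T' := h
      have : (0 : ℕ) ∈ R \ T' := h' ▸ h0
      exact (Finset.mem_sdiff.mp this).2 h0'
    · intro h
      have h' : R \ T = T' := h
      have : (0 : ℕ) ∈ R \ T := h'.symm ▸ h0'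
      exact (Finset.mem_sdiff.mp this).2 h0
    · intro h
      have h' : R \ T = R \ T' := h
      apply hTT'
      have := congrArg (fun U => R \ U) h'
      simpa [Finset.sdiff_sdiff_eq_self h1, Finset.sdiff_sdiff_eq_self h1'] using this
    · exact Finset.not_disjoint_iff.mpr ⟨0, h0, h0'⟩
    · intro hdis
      apply hTT'
      apply hsub_eq h1 h2 h2'
      intro x hx
      have hxR : x ∈ R := h1 hx
      have := Finset.disjoint_left.mp hdis hx
      by_contra hx'
      exact this (Finset.mem_sdiff.mpr ⟨hxR, hx'⟩)
    · intro hdis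
      apply hTT'.symm
      apply hsub_eq h1' h2' h2
      intro x hx
      have hxR : x ∈ R := h1' hx
      have := Finset.disjoint_right.mp hdis hx
      by_contra hx'
      exact this (Finset.mem_sdiff.mpr ⟨hxR, hx'⟩)
    · intro hdis
      have hsub : R \ T ⊆ T' := by
        intro x hx
        have := Finset.disjoint_left.mp hdis hx
        rcases Finset.mem_sdiff.mp hx with ⟨hxR, hxT⟩
        by_contra hx'
        exact this (Finset.mem_sdiff.mpr ⟨hxR, hx'⟩)
      have heq : R \ T = T' := hsub_eq Finset.sdiff_subset (hcsd T hT) h2' hsub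
      have : (0 : ℕ) ∈ R \ T := heq ▸ h0'
      exact (Finset.mem_sdiff.mp this).2 h0
  · rw [hM0, Finset.card_image_of_injOn (fun T _ T' _ h => congrArg Prod.fst h)]
    have : Fam.card = (((Finset.range (2 * r)).erase 0).powersetCard (r - 1)).card := by
      apply Finset.card_bij (fun T _ => T.erase 0)
      · intro T hT
        obtain ⟨h1, h2, h0⟩ := hmem T hT
        refine Finset.mem_powersetCard.mpr ⟨?_, ?_⟩
        · exact Finset.erase_subset_erase _ h1
        · rw [Finset.card_erase_of_mem h0, h2]
      · intro T hT T' hT' h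
        obtain ⟨_, _, h0⟩ := hmem T hT
        obtain ⟨_, _, h0'⟩ := hmem T' hT'
        rw [← Finset.insert_erase h0, ← Finset.insert_erase h0', h]
      · intro U hU
        rcases Finset.mem_powersetCard.mp hU with ⟨hU1, hU2⟩
        have h0U : (0 : ℕ) ∉ U := fun h => (Finset.mem_erase.mp (hU1 h)).1 rfl
        refine ⟨insert 0 U, ?_, ?_⟩
        · rw [hFam]
          refine Finset.mem_filter.mpr ⟨Finset.mem_powersetCard.mpr ⟨?_, ?_⟩,
            Finset.mem_insert_self 0 U⟩
          · exact Finset.insert_subset (Finset.mem_range.mpr (by omega))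
              (hU1.trans (Finset.erase_subset _ _))
          · rw [Finset.card_insert_of_notMem h0U, hU2]
            omega
        · rw [Finset.erase_insert h0U]
    rw [this, Finset.card_powersetCard, Finset.card_erase_of_mem
      (Finset.mem_range.mpr (by omega)), Finset.card_range]
section MainAux

variable {n : ℕ}

/-- convert a pair of finsets of naturals to a pair over `Fin n`. -/
def pairToFin (n : ℕ) (e : Finset ℕ × Finset ℕ) : Finset (Fin n) × Finset (Fin n) :=
  (toFin n e.1, toFin n e.2)

@[simp] lemma pairToFin_fst (e : Finset ℕ × Finset ℕ) :
    (pairToFin n e).1 = toFin n e.1 := rfl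

@[simp] lemma pairToFin_snd (e : Finset ℕ × Finset ℕ) :
    (pairToFin n e).2 = toFin n e.2 := rfl

end MainAux

end KIM

theorem maximum_induced_matching_structure (n r : ℕ) (hr : 2 ≤ r) (hn : 2 * r ≤ n)
    (M : Finset (Finset ℕ × Finset ℕ)) (hM : IsInducedMatching n r M)
    (hmax : ∀ M' : Finset (Finset ℕ × Finset ℕ),
      IsInducedMatching n r M' → M'.card ≤ M.card) :
    M.card = (2 * r).choose r / 2 ∧
    ∃ S ⊆ Finset.range n, S.card = 2 * r ∧
      (∀ e ∈ M, e.1 ⊆ S ∧ e.2 ⊆ S) ∧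
      (∀ T ⊆ S, T.card = r → ∃ e ∈ M, e.1 = T ∨ e.2 = T) := by
  classical
  obtain ⟨hM1, hM2⟩ := hM
  have hr0 : 0 < r := by omega
  have hsets : ∀ e ∈ M, e.1 ⊆ Finset.range n ∧ e.1.card = r ∧
      e.2 ⊆ Finset.range n ∧ e.2.card = r ∧ Disjoint e.1 e.2 := fun e he =>
    ⟨(hM1 e he).1.1, (hM1 e he).1.2, (hM1 e he).2.1.1, (hM1 e he).2.1.2, (hM1 e he).2.2⟩
  set P : Finset (Finset (Fin n) × Finset (Fin n)) :=
    (M.image (KIM.pairToFin n)) ∪ (M.image (fun e => (KIM.pairToFin n e).swap)) with hP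
  have hFne : ∀ e ∈ M, ∀ e' ∈ M, KIM.pairToFin n e ≠ (KIM.pairToFin n e').swap := by
    intro e he e' he' h
    have h1 : KIM.toFin n e.1 = KIM.toFin n e'.2 := congrArg Prod.fst h
    have he1 : e.1 = e'.2 := KIM.toFin_inj (hsets e he).1 (hsets e' he').2.2.1 h1
    by_cases hee : e = e'
    · subst hee
      have hd := (hsets e he).2.2.2.2
      rw [he1] at hd
      obtain ⟨x, hx⟩ := Finset.card_pos.mp
        (show 0 < e.2.card by rw [(hsets e he).2.2.2.1]; omega)
      exact Finset.disjoint_left.mp hd hx hx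
    · exact (hM2 e he e' he' hee).2.1 he1
  have hFinj : Set.InjOn (KIM.pairToFin n) M := by
    intro e he e' he' h
    have h1 := KIM.toFin_inj (hsets e he).1 (hsets e' he').1 (congrArg Prod.fst h)
    have h2 := KIM.toFin_inj (hsets e he).2.2.1 (hsets e' he').2.2.1 (congrArg Prod.snd h)
    exact Prod.ext h1 h2
  have hPmem : ∀ p ∈ P, ∃ e ∈ M, p = KIM.pairToFin n e ∨ p = (KIM.pairToFin n e).swap := by
    intro p hp
    rcases Finset.mem_union.mp hp with h | h
    · obtain ⟨e, he, rfl⟩ := Finset.mem_image.mp h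
      exact ⟨e, he, Or.inl rfl⟩
    · obtain ⟨e, he, rfl⟩ := Finset.mem_image.mp h
      exact ⟨e, he, Or.inr rfl⟩
  have h1P : ∀ p ∈ P, p.1.card = r ∧ p.2.card = r ∧ Disjoint p.1 p.2 := by
    intro p hp
    obtain ⟨e, he, hor⟩ := hPmem p hp
    obtain ⟨hs1, hc1, hs2, hc2, hd⟩ := hsets e he
    rcases hor with rfl | rfl
    · exact ⟨by rw [KIM.pairToFin_fst, KIM.card_toFin hs1, hc1],
        by rw [KIM.pairToFin_snd, KIM.card_toFin hs2, hc2],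
        KIM.disjoint_toFin_of hd⟩
    · exact ⟨by rw [Prod.fst_swap, KIM.pairToFin_snd, KIM.card_toFin hs2, hc2],
        by rw [Prod.snd_swap, KIM.pairToFin_fst, KIM.card_toFin hs1, hc1],
        (KIM.disjoint_toFin_of hd).symm⟩
  have hself : ∀ s : Finset ℕ, s.card = r → ¬ Disjoint s s := by
    intro s hs hd
    obtain ⟨x, hx⟩ := Finset.card_pos.mp (show 0 < s.card by rw [hs]; omega)
    exact Finset.disjoint_left.mp hd hx hx
  have h2P : KIM.CrossInt P := by
    intro p hp q hq hne
    obtain ⟨e, he, hor⟩ := hPmem p hp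
    obtain ⟨e', he', hor'⟩ := hPmem q hq
    obtain ⟨hs1, hc1, hs2, hc2, hd⟩ := hsets e he
    obtain ⟨hs1', hc1', hs2', hc2', hd'⟩ := hsets e' he'
    by_cases hee : e = e'
    · subst hee
      rcases hor with rfl | rfl <;> rcases hor' with rfl | rfl
      · exact absurd rfl hne
      · exact KIM.not_disjoint_toFin hs1 (hself e.1 hc1)
      · exact KIM.not_disjoint_toFin hs2 (hself e.2 hc2)
      · exact absurd rfl hne
    · obtain ⟨_, _, _, _, h11, h12, h21, h22⟩ := hM2 e he e' he' hee
      rcases hor with rfl | rfl <;> rcases hor' with rfl | rfl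
      · exact KIM.not_disjoint_toFin hs1 h12
      · exact KIM.not_disjoint_toFin hs1 h11
      · exact KIM.not_disjoint_toFin hs2 h22
      · exact KIM.not_disjoint_toFin hs2 h21
  have hsymP : ∀ p ∈ P, p.swap ∈ P := by
    intro p hp
    rcases Finset.mem_union.mp hp with h | h
    · obtain ⟨e, he, rfl⟩ := Finset.mem_image.mp h
      exact Finset.mem_union_right _ (Finset.mem_image_of_mem _ he)
    · obtain ⟨e, he, rfl⟩ := Finset.mem_image.mp h
      rw [Prod.swap_swap]
      exact Finset.mem_union_left _ (Finset.mem_image_of_mem _ he)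
  have hPcard : P.card = 2 * M.card := by
    rw [hP, Finset.card_union_of_disjoint, Finset.card_image_of_injOn hFinj,
      Finset.card_image_of_injOn (fun e he e' he' h =>
        hFinj he he' (by rw [← Prod.swap_swap (KIM.pairToFin n e), h, Prod.swap_swap]))]
    · ring
    · rw [Finset.disjoint_left]
      rintro p hp1 hp2
      obtain ⟨e, he, rfl⟩ := Finset.mem_image.mp hp1
      obtain ⟨e', he', heq⟩ := Finset.mem_image.mp hp2
      exact hFne e he e' he' heq.symm
  obtain ⟨M0, hM0, hM0c⟩ := KIM.construction_exists n r (by omega) hn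
  have hlow : (2 * r - 1).choose (r - 1) ≤ M.card := hM0c ▸ hmax M0 hM0
  have hdouble : (2 * r).choose r = 2 * ((2 * r - 1).choose (r - 1)) := by
    obtain ⟨m, rfl⟩ : ∃ m, r = m + 1 := ⟨r - 1, by omega⟩
    have h1 : 2 * (m + 1) = 2 * m + 2 := by ring
    have h2 : 2 * (m + 1) - 1 = 2 * m + 1 := by omega
    have h3 : m + 1 - 1 = m := by omega
    rw [h2, h3, h1]
    exact KIM.choose_double m
  have hPle : P.card ≤ (2 * r).choose r := (KIM.family_card_le hr0 h1P h2P).1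
  have hPC : P.card = (2 * r).choose r := le_antisymm hPle (by omega)
  obtain ⟨Shat, hShatcard, hPeq⟩ := KIM.family_structure hr0 h1P h2P hsymP hPC
  constructor
  · omega
  · refine ⟨Shat.image Fin.val, ?_, ?_, ?_, ?_⟩
    · intro x hx
      obtain ⟨i, _, rfl⟩ := Finset.mem_image.mp hx
      exact Finset.mem_range.mpr i.isLt
    · rw [Finset.card_image_of_injective _ Fin.val_injective, hShatcard]
    · intro e he
      have hpe : KIM.pairToFin n e ∈ P :=
        Finset.mem_union_left _ (Finset.mem_image_of_mem _ he)
      rw [hPeq] at hpe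
      obtain ⟨T, hT, hTe⟩ := Finset.mem_image.mp hpe
      rcases Finset.mem_powersetCard.mp hT with ⟨hT1, _⟩
      have h1 : T = KIM.toFin n e.1 := congrArg Prod.fst hTe
      have h2 : Shat \ T = KIM.toFin n e.2 := congrArg Prod.snd hTe
      constructor
      · rw [← KIM.image_toFin (hsets e he).1, ← h1]
        exact Finset.image_subset_image hT1
      · rw [← KIM.image_toFin (hsets e he).2.2.1, ← h2]
        exact Finset.image_subset_image Finset.sdiff_subset
    · intro T hTS hTc
      have hTrange : T ⊆ Finset.range n := by
        intro x hx
        obtain ⟨i, _, rfl⟩ := Finset.mem_image.mp (hTS hx)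
        exact Finset.mem_range.mpr i.isLt
      have hThat_sub : KIM.toFin n T ⊆ Shat := by
        intro i hi
        have hiT : (i : ℕ) ∈ T := KIM.mem_toFin.mp hi
        obtain ⟨j, hj, hji⟩ := Finset.mem_image.mp (hTS hiT)
        rwa [Fin.val_injective hji] at hj
      have hpair : (KIM.toFin n T, Shat \ KIM.toFin n T) ∈ P := by
        rw [hPeq]
        exact Finset.mem_image_of_mem _ (Finset.mem_powersetCard.mpr
          ⟨hThat_sub, by rw [KIM.card_toFin hTrange, hTc]⟩)
      rcases Finset.mem_union.mp hpair with h | h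
      · obtain ⟨e, he, heq⟩ := Finset.mem_image.mp h
        have h1 : KIM.toFin n e.1 = KIM.toFin n T := congrArg Prod.fst heq
        exact ⟨e, he, Or.inl (KIM.toFin_inj (hsets e he).1 hTrange h1)⟩
      · obtain ⟨e, he, heq⟩ := Finset.mem_image.mp h
        have h1 : KIM.toFin n e.2 = KIM.toFin n T := congrArg Prod.fst heq
        exact ⟨e, he, Or.inr (KIM.toFin_inj (hsets e he).2.2.1 hTrange h1)⟩
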